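/- Let G be an abelian Polish group in which every compact subset is contained in a compact subgroup (G is hull-compact). Then every Haar meager subset of G is strongly Haar meager. -/

import Mathlib

/-- A set in an abelian Polish group is Haar meager (Darji) if some Borel superset has a
continuous witness function from a nonempty compact metric space all of whose preimages of
translates are meager. -/
def HaarMeager {G : Type*} [AddCommGroup G] [TopologicalSpace G] (A : Set G) : Prop :=
  ∃ B : Set G, A ⊆ B ∧ @MeasurableSet G (borel G) B ∧
    ∃ (K : Type) (_ : MetricSpace K), Nonempty K ∧ CompactSpace K ∧
      ∃ f : K → G, Continuous f ∧ ∀ g : G, IsMeagre (f ⁻¹' ((fun x => x + g) '' B))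

/-- A set is strongly Haar meager if some Borel superset has a compact witness set meeting
every translate in a relatively meager set. -/
def StronglyHaarMeager {G : Type*} [AddCommGroup G] [TopologicalSpace G] (A : Set G) : Prop :=
  ∃ B : Set G, A ⊆ B ∧ @MeasurableSet G (borel G) B ∧
    ∃ C : Set G, C.Nonempty ∧ IsCompact C ∧
      ∀ g : G, IsMeagre (Subtype.val ⁻¹' ((fun x => x + g) '' B) : Set C)

open Topology Filter Set TopologicalSpace

section KU

variable {X Y : Type*} [TopologicalSpace X] [TopologicalSpace Y]

/-- Slices of a dense open subset of a product are densely often dense. -/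
lemma KU.dense_slice [SecondCountableTopology Y] {W : Set (X × Y)} (hWo : IsOpen W)
    (hWd : Dense W) : {x : X | Dense {y | (x, y) ∈ W}} ∈ residual X := by
  have h1 : (⋂ V ∈ countableBasis Y, {x : X | (V ∩ {y | (x, y) ∈ W}).Nonempty}) ∈ residual X := by
    refine (countable_bInter_mem (countable_countableBasis Y)).mpr fun V hV => ?_
    have hVo : IsOpen V := isOpen_of_mem_countableBasis hV
    have hVne : V.Nonempty := nonempty_of_mem_countableBasis hV
    refine residual_of_dense_open ?_ ?_
    · have : {x : X | (V ∩ {y | (x, y) ∈ W}).Nonempty} = Prod.fst '' (W ∩ univ ×ˢ V) := by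
        ext x
        constructor
        · rintro ⟨y, hyV, hyW⟩
          exact ⟨(x, y), ⟨hyW, mem_univ _, hyV⟩, rfl⟩
        · rintro ⟨⟨x', y⟩, ⟨hW, -, hV'⟩, rfl⟩
          exact ⟨y, hV', hW⟩
      rw [this]
      exact isOpenMap_fst _ (hWo.inter (isOpen_univ.prod hVo))
    · rw [dense_iff_inter_open]
      rintro U hUo hUne
      obtain ⟨⟨x, y⟩, ⟨hxU, hyV⟩, hW⟩ := hWd.inter_open_nonempty (U ×ˢ V) (hUo.prod hVo)
        (hUne.prod hVne)
      exact ⟨x, hxU, ⟨y, hyV, hW⟩⟩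
  refine mem_of_superset h1 fun x hx => ?_
  simp only [mem_iInter, mem_setOf_eq] at hx
  exact (isBasis_countableBasis Y).dense_iff.mpr fun o ho hone =>
    hx o ho

/-- Slices of a meager subset of a product are residually often meager. -/
lemma KU.meager_slice [SecondCountableTopology Y] {M : Set (X × Y)} (hM : IsMeagre M) :
    {x : X | IsMeagre {y | (x, y) ∈ M}} ∈ residual X := by
  rw [IsMeagre] at hM
  obtain ⟨S, hSo, hSd, hSc, hSsub⟩ := mem_residual_iff.mp hM
  have h1 : (⋂ W ∈ S, {x : X | Dense {y | (x, y) ∈ W}}) ∈ residual X :=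
    (countable_bInter_mem hSc).mpr fun W hW => KU.dense_slice (hSo W hW) (hSd W hW)
  refine mem_of_superset h1 fun x hx => ?_
  simp only [mem_iInter, mem_setOf_eq] at hx ⊢
  have h2 : (⋂ W ∈ S, {y | (x, y) ∈ W}) ∈ residual Y :=
    (countable_bInter_mem hSc).mpr fun W hW =>
      residual_of_dense_open ((hSo W hW).preimage (Continuous.prodMk_right x)) (hx W hW)
  have hmeag : IsMeagre (⋂ W ∈ S, {y | (x, y) ∈ W})ᶜ := by
    rw [IsMeagre, compl_compl]; exact h2
  refine hmeag.mono fun y hy => ?_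
  intro hy2
  simp only [mem_iInter, mem_setOf_eq] at hy2
  exact hSsub (by simpa [mem_sInter] using fun W hW => hy2 W hW : (x, y) ∈ ⋂₀ S) hy

/-- Forward Kuratowski–Ulam: a Baire measurable set in a product all of whose vertical
slices are meager is meager. -/
lemma KU.meager_of_slices [BaireSpace X] [BaireSpace Y] [SecondCountableTopology Y]
    {E : Set (X × Y)} (hE : BaireMeasurableSet E) (h : ∀ x : X, IsMeagre {y | (x, y) ∈ E}) :
    IsMeagre E := by
  obtain ⟨W, hWo, hEW⟩ := hE.residualEq_isOpen
  have hM : IsMeagre {p : X × Y | ¬(p ∈ E ↔ p ∈ W)} := by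
    rw [IsMeagre]
    refine mem_of_superset hEW fun p hp => ?_
    simp only [mem_compl_iff, mem_setOf_eq, not_not]
    exact iff_of_eq hp
  have hW : W = ∅ := by
    by_contra hne
    obtain ⟨⟨x₀, y₀⟩, hp⟩ := nonempty_iff_ne_empty.mpr hne
    obtain ⟨U, V, hUo, hVo, hxU, hyV, hUV⟩ := isOpen_prod_iff.mp hWo x₀ y₀ hp
    have hR := KU.meager_slice (X := X) (Y := Y) hM
    obtain ⟨x, hxU', hxR⟩ :=
      (dense_of_mem_residual hR).inter_open_nonempty U hUo ⟨x₀, hxU⟩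
    -- V is contained in the union of two meager subsets of Y
    have hsub : V ⊆ {y | (x, y) ∈ E} ∪ {y | ¬((x, y) ∈ E ↔ (x, y) ∈ W)} := by
      intro y hyV'
      by_cases hE' : (x, y) ∈ E
      · exact Or.inl hE'
      · exact Or.inr fun hiff => hE' (hiff.mpr (hUV ⟨hxU', hyV'⟩))
    have hunion : IsMeagre ({y | (x, y) ∈ E} ∪ {y | ¬((x, y) ∈ E ↔ (x, y) ∈ W)}) := by
      rw [IsMeagre, compl_union]
      exact Filter.inter_mem (h x) hxR
    have hVmeag : IsMeagre V := hunion.mono hsub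
    have : Dense Vᶜ := dense_of_mem_residual hVmeag
    obtain ⟨y, hy1, hy2⟩ := this.inter_open_nonempty V hVo ⟨y₀, hyV⟩
    exact hy2 hy1
  refine hM.mono fun p hp => ?_
  simp only [mem_setOf_eq, hW, mem_empty_iff_false, iff_false, not_not]
  exact hp

end KU

theorem hullCompact_haarMeager_eq_stronglyHaarMeager {G : Type*} [AddCommGroup G]
    [TopologicalSpace G] [IsTopologicalAddGroup G] [PolishSpace G]
    (hull : ∀ K : Set G, IsCompact K → ∃ H : AddSubgroup G, IsCompact (H : Set G) ∧ K ⊆ H)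
    (A : Set G) (hA : HaarMeager A) : StronglyHaarMeager A := by
  obtain ⟨B, hAB, hB, K, _instK, hKne, hKcomp, f, hf, hmeag⟩ := hA
  obtain ⟨H, hHc, hfH⟩ := hull (f '' Set.univ) (isCompact_univ.image hf)
  letI := upgradeIsCompletelyMetrizable G
  borelize G
  refine ⟨B, hAB, hB, (H : Set G), ⟨0, H.zero_mem⟩, hHc, fun g => ?_⟩
  haveI : CompactSpace (H : Set G) := isCompact_iff_compactSpace.mp hHc
  haveI : Nonempty K := hKne
  -- translate images to preimages
  have himg : ∀ g' : G, (fun x => x + g') '' B = (fun x => x + -g') ⁻¹' B := by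
    intro g'
    ext x
    constructor
    · rintro ⟨b, hb, rfl⟩
      simpa [add_assoc] using hb
    · intro hx
      exact ⟨x + -g', hx, neg_add_cancel_right x g'⟩
  -- the Borel witness set on the product
  borelize (↥(H : Set G) × K)
  set D : Set G := (fun x => x + -g) ⁻¹' B with hD
  have hDm : MeasurableSet D := (continuous_add_right (-g)).measurable hB
  set E : Set (↥(H : Set G) × K) := {p | f p.2 + ↑p.1 ∈ D} with hE
  have hcont : Continuous fun p : ↥(H : Set G) × K => f p.2 + ↑p.1 :=
    (hf.comp continuous_snd).add (continuous_subtype_val.comp continuous_fst)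
  have hEm : MeasurableSet E := hcont.measurable hDm
  -- all slices over the subgroup side are meager by the Haar meager witness
  have hslices : ∀ h : ↥(H : Set G), IsMeagre {x : K | (h, x) ∈ E} := by
    intro h
    have h1 := hmeag (g - ↑h)
    rw [himg] at h1
    have heq : {x : K | (h, x) ∈ E} = f ⁻¹' ((fun x => x + -(g - ↑h)) ⁻¹' B) := by
      ext x
      simp only [hE, hD, Set.mem_setOf_eq, Set.mem_preimage]
      rw [show f x + ↑h + -g = f x + -(g - ↑h) by abel]
    rw [heq]
    exact h1
  have hEmeag : IsMeagre E := KU.meager_of_slices hEm.baireMeasurableSet hslices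
  -- swap and take a slice over K
  have hE2 : IsMeagre ((Homeomorph.prodComm K ↥(H : Set G)) ⁻¹' E) :=
    hEmeag.preimage_of_isOpenMap (Homeomorph.prodComm _ _).continuous
      (Homeomorph.prodComm _ _).isOpenMap
  have hR := KU.meager_slice hE2
  obtain ⟨x₀, hx₀⟩ := (dense_of_mem_residual hR).nonempty
  have hT : IsMeagre {h : ↥(H : Set G) | f x₀ + ↑h ∈ D} := hx₀
  have hc : f x₀ ∈ (H : Set G) := hfH ⟨x₀, Set.mem_univ _, rfl⟩
  -- translate the slice back by f x₀ inside the compact subgroup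
  let e : ↥(H : Set G) ≃ₜ ↥(H : Set G) :=
    { toFun := fun h => ⟨↑h - f x₀, H.sub_mem h.2 hc⟩
      invFun := fun h => ⟨↑h + f x₀, H.add_mem h.2 hc⟩
      left_inv := fun h => Subtype.ext (by simp)
      right_inv := fun h => Subtype.ext (by simp)
      continuous_toFun := (continuous_subtype_val.sub continuous_const).subtype_mk _
      continuous_invFun := (continuous_subtype_val.add continuous_const).subtype_mk _ }
  have hgoal : (Subtype.val ⁻¹' ((fun x => x + g) '' B) : Set ↥(H : Set G)) =
      e ⁻¹' {h : ↥(H : Set G) | f x₀ + ↑h ∈ D} := by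
    ext h
    simp only [himg g, hD, Set.mem_preimage, Set.mem_setOf_eq]
    show (h : G) + -g ∈ B ↔ f x₀ + ((h : G) - f x₀) + -g ∈ B
    rw [show f x₀ + ((h : G) - f x₀) + -g = (h : G) + -g by abel]
  rw [hgoal]
  exact hT.preimage_of_isOpenMap e.continuous e.isOpenMap
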